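/- Let λ be a real number and d = 8. There exist real numbers p₁ ≤ p₂ ≤ ⋯ ≤ p₈ and A satisfying p₁ + ⋯ + p₈ = 1 and p₁² + ⋯ + p₈² + A² = 1 together with 2p₁ − λA > 0 and 2(p₁ + ⋯ + p₆) + λA > 0, if and only if |λ| < 4√2/√7. (The critical dilaton coupling for a 1-form in 9 spacetime dimensions is λ_c = 4√2/√7, which coincides with the Kaluza–Klein coupling 2√(d/(d−1)) for d = 8.) -/

import Mathlib

section Aux

private lemma crit_sq : (4 * Real.sqrt 2 / Real.sqrt 7) ^ 2 = 32 / 7 := by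
  rw [div_pow, mul_pow, Real.sq_sqrt (by norm_num : (0:ℝ) ≤ 2),
    Real.sq_sqrt (by norm_num : (0:ℝ) ≤ 7)]
  norm_num

private lemma crit_pos : 0 < 4 * Real.sqrt 2 / Real.sqrt 7 := by
  positivity

/-- Key inequality: for ordered Kasner exponents with `p₁ + (p₁+⋯+p₆) ≥ 0`,
we have `7 s₆² ≤ 8 A²`. -/
private lemma key_ineq (p1 p2 p3 p4 p5 p6 p7 p8 A : ℝ)
    (h12 : p1 ≤ p2) (h23 : p2 ≤ p3) (h34 : p3 ≤ p4) (h45 : p4 ≤ p5)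
    (h56 : p5 ≤ p6) (h67 : p6 ≤ p7) (h78 : p7 ≤ p8)
    (hsum : p1 + p2 + p3 + p4 + p5 + p6 + p7 + p8 = 1)
    (hsq : p1^2 + p2^2 + p3^2 + p4^2 + p5^2 + p6^2 + p7^2 + p8^2 + A^2 = 1)
    (h0 : 0 ≤ 2*p1 + p2 + p3 + p4 + p5 + p6) :
    7 * (p1 + p2 + p3 + p4 + p5 + p6)^2 ≤ 8 * A^2 := by
  have hq1 : (0:ℝ) ≤ p2 - p1 := by linarith
  have hq2 : (0:ℝ) ≤ p3 - p2 := by linarith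
  have hq3 : (0:ℝ) ≤ p4 - p3 := by linarith
  have hq4 : (0:ℝ) ≤ p5 - p4 := by linarith
  have hq5 : (0:ℝ) ≤ p6 - p5 := by linarith
  have hq6 : (0:ℝ) ≤ p7 - p6 := by linarith
  have hq7 : (0:ℝ) ≤ p8 - p7 := by linarith
  have hsum2 : (p1+p2+p3+p4+p5+p6+p7+p8)^2 = 1 := by rw [hsum]; norm_num
  have hterms : (0:ℝ) ≤
      8*(p1+p2+p3+p4+p5+p6+p7+p8)^2 - 7*(p1+p2+p3+p4+p5+p6)^2
        - 8*(p1^2+p2^2+p3^2+p4^2+p5^2+p6^2+p7^2+p8^2) := by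
    have hh : (0:ℝ) ≤ p1+p2+p3+p4+p5+p6+p7+p8 := by rw [hsum]; norm_num
    linarith [mul_nonneg h0 hq1, mul_nonneg h0 hq2, mul_nonneg h0 hq3,
      mul_nonneg h0 hq4, mul_nonneg h0 hq5, mul_nonneg h0 hq6, mul_nonneg h0 hq7,
      mul_nonneg hq1 hq2, mul_nonneg hq1 hq3, mul_nonneg hq1 hq4,
      mul_nonneg hq1 hq5, mul_nonneg hq1 hq6, mul_nonneg hq1 hq7,
      mul_nonneg hq2 hq3, mul_nonneg hq2 hq4, mul_nonneg hq2 hq5,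
      mul_nonneg hq2 hq6, mul_nonneg hq2 hq7,
      mul_nonneg hq3 hq4, mul_nonneg hq3 hq5, mul_nonneg hq3 hq6,
      mul_nonneg hq3 hq7,
      mul_nonneg hq4 hq5, mul_nonneg hq4 hq6, mul_nonneg hq4 hq7,
      mul_nonneg hq5 hq6, mul_nonneg hq5 hq7, mul_nonneg hq6 hq7,
      mul_nonneg hh h0, mul_nonneg hh hq1, mul_nonneg hh hq3,
      mul_nonneg hh hq4, mul_nonneg hh hq5, mul_nonneg hh hq6]
  nlinarith [hterms, hsum2, hsq]


private lemma b_lower (u : ℝ) (h1 : 1 ≤ u) (h2 : u < 32/7) :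
    (1:ℝ)/8 ≤ 15119/61250 + 139/7000*u - 9/5000*u^2 := by
  nlinarith [mul_nonneg (sub_nonneg.2 h1) (sub_nonneg.2 h1),
    mul_nonneg (sub_nonneg.2 h1) (by linarith : (0:ℝ) ≤ 32 - 7*u),
    mul_nonneg (by linarith : (0:ℝ) ≤ 32 - 7*u) (by linarith : (0:ℝ) ≤ 32 - 7*u)]

private lemma b_upper (u : ℝ) (h1 : 1 ≤ u) (h2 : u < 32/7) :
    15119/61250 + 139/7000*u - 9/5000*u^2 < (1:ℝ)/2 := by
  nlinarith [mul_nonneg (sub_nonneg.2 h1) (sub_nonneg.2 h1),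
    mul_nonneg (sub_nonneg.2 h1) (by linarith : (0:ℝ) ≤ 32 - 7*u),
    mul_pos (by linarith : (0:ℝ) < 32 - 7*u) (by linarith : (0:ℝ) < 32 - 7*u)]

private lemma electric_poly (u : ℝ) (h1 : 1 ≤ u) (h2 : u < 32/7) :
    (6*(15119/61250 + 139/7000*u - 9/5000*u^2) - 1)^2 <
      u * (1/2 + 6*(15119/61250 + 139/7000*u - 9/5000*u^2)
        - 24*(15119/61250 + 139/7000*u - 9/5000*u^2)^2) := by
  have e1 : (0:ℝ) ≤ u - 1 := by linarith
  have e2 : (0:ℝ) < 32 - 7*u := by linarith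
  nlinarith [pow_pos e2 5, mul_nonneg e1 (pow_nonneg e2.le 4),
    mul_nonneg (mul_nonneg e1 e1) (pow_nonneg e2.le 3),
    mul_nonneg (mul_nonneg (mul_nonneg e1 e1) e1) (mul_nonneg e2.le e2.le),
    mul_nonneg (mul_nonneg (mul_nonneg (mul_nonneg e1 e1) e1) e1) e2.le]

private lemma magnetic_poly (u : ℝ) (h1 : 1 ≤ u) (h2 : u < 32/7) :
    u * (1/2 + 6*(15119/61250 + 139/7000*u - 9/5000*u^2)
        - 24*(15119/61250 + 139/7000*u - 9/5000*u^2)^2) <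
      (2 - 4*(15119/61250 + 139/7000*u - 9/5000*u^2))^2 := by
  have e1 : (0:ℝ) ≤ u - 1 := by linarith
  have e2 : (0:ℝ) < 32 - 7*u := by linarith
  nlinarith [pow_pos e2 5, mul_nonneg e1 (pow_nonneg e2.le 4),
    mul_nonneg (mul_nonneg e1 e1) (pow_nonneg e2.le 3),
    mul_nonneg (mul_nonneg (mul_nonneg e1 e1) e1) (mul_nonneg e2.le e2.le),
    mul_nonneg (mul_nonneg (mul_nonneg (mul_nonneg e1 e1) e1) e1) e2.le]

private lemma sq_lt_lower (a x : ℝ) (h : a^2 < x^2) (hx : 0 ≤ x) : a < x := by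
  nlinarith [sq_nonneg (a + x), sq_nonneg (a - x)]

private lemma sq_lt_upper (x c : ℝ) (h : x^2 < c^2) (hx : 0 ≤ x) (hc : 0 < c) :
    x < c := by
  nlinarith [sq_nonneg (x + c), sq_nonneg (x - c)]

private lemma S_pos (u S c : ℝ) (h : c^2 < u * S) (hu : 0 < u) : 0 < S := by
  nlinarith [sq_nonneg c]

end Aux

set_option maxHeartbeats 2000000 in
/-- The critical dilaton coupling for a 1-form in 9 spacetime dimensions
(`d = 8` spatial dimensions) is `λ_c = 4√2/√7`. -/
theorem subcritical_one_form_d8 (lam : ℝ) :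
    (∃ p₁ p₂ p₃ p₄ p₅ p₆ p₇ p₈ A : ℝ,
      p₁ ≤ p₂ ∧ p₂ ≤ p₃ ∧ p₃ ≤ p₄ ∧ p₄ ≤ p₅ ∧ p₅ ≤ p₆ ∧ p₆ ≤ p₇ ∧ p₇ ≤ p₈ ∧
      p₁ + p₂ + p₃ + p₄ + p₅ + p₆ + p₇ + p₈ = 1 ∧
      p₁ ^ 2 + p₂ ^ 2 + p₃ ^ 2 + p₄ ^ 2 + p₅ ^ 2 + p₆ ^ 2 + p₇ ^ 2 + p₈ ^ 2
        + A ^ 2 = 1 ∧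
      2 * p₁ - lam * A > 0 ∧
      2 * (p₁ + p₂ + p₃ + p₄ + p₅ + p₆) + lam * A > 0) ↔
    |lam| < 4 * Real.sqrt 2 / Real.sqrt 7 := by
  constructor
  · rintro ⟨p1, p2, p3, p4, p5, p6, p7, p8, A, h12, h23, h34, h45, h56, h67, h78,
      hsum, hsq, hE, hM⟩
    -- forward direction
    have h6p1 : p1 + p2 + p3 + p4 + p5 + p6 ≥ 6 * p1 := by linarith
    have h0 : 0 ≤ 2*p1 + p2 + p3 + p4 + p5 + p6 := by linarith
    have hs6pos : 0 < p1 + p2 + p3 + p4 + p5 + p6 := by linarith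
    have htlt : lam * A < 2 * (p1 + p2 + p3 + p4 + p5 + p6) := by linarith
    have htgt : -(2 * (p1 + p2 + p3 + p4 + p5 + p6)) < lam * A := by linarith
    have ht2 : (lam * A)^2 < 4 * (p1 + p2 + p3 + p4 + p5 + p6)^2 := by
      nlinarith [htlt, htgt]
    have hkey := key_ineq p1 p2 p3 p4 p5 p6 p7 p8 A h12 h23 h34 h45 h56 h67 h78
      hsum hsq h0
    have hs62 : 0 < (p1 + p2 + p3 + p4 + p5 + p6)^2 := pow_pos hs6pos 2
    have hA2pos : 0 < A^2 := by linarith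
    have h732 : (7*lam^2) * A^2 < 32 * A^2 := by
      nlinarith [ht2, hkey]
    have hlam2 : 7 * lam^2 < 32 := by
      have := (mul_lt_mul_iff_of_pos_right hA2pos).mp h732
      linarith
    have hcsq := crit_sq
    have hcpos := crit_pos
    by_contra hcon
    push_neg at hcon
    have h1 : (4 * Real.sqrt 2 / Real.sqrt 7) * (4 * Real.sqrt 2 / Real.sqrt 7)
        ≤ |lam| * |lam| :=
      mul_self_le_mul_self hcpos.le hcon
    have h2 : |lam| * |lam| = lam^2 := by rw [← sq_abs lam]; ring
    nlinarith [h1, h2, hcsq, hlam2]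
  · intro hlam
    have hl2 : lam^2 < 32/7 := by
      nlinarith [crit_sq, crit_pos, abs_nonneg lam, sq_abs lam,
        mul_self_lt_mul_self (abs_nonneg lam) hlam]
    obtain ⟨sg, hsgdef⟩ : ∃ s : ℝ, s = if lam < 0 then -1 else 1 := ⟨_, rfl⟩
    have hsg2 : sg^2 = 1 := by
      rw [hsgdef]; split_ifs <;> norm_num
    have hsgl : sg * lam = |lam| := by
      rw [hsgdef]; split_ifs with h
      · rw [abs_of_neg h]; ring
      · rw [abs_of_nonneg (not_lt.1 h)]; ring
    have habs0 : 0 ≤ |lam| := abs_nonneg lam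
    by_cases hc : |lam| ≤ 1
    · -- all exponents equal 1/8
      refine ⟨1/8, 1/8, 1/8, 1/8, 1/8, 1/8, 1/8, 1/8, -(sg * Real.sqrt (7/8)),
        le_refl _, le_refl _, le_refl _, le_refl _, le_refl _, le_refl _, le_refl _,
        by norm_num, ?_, ?_, ?_⟩
      · have : (-(sg * Real.sqrt (7/8)))^2 = sg^2 * Real.sqrt (7/8)^2 := by ring
        rw [this, hsg2, Real.sq_sqrt (by norm_num : (0:ℝ) ≤ 7/8)]
        norm_num
      · have : 2 * (1/8 : ℝ) - lam * -(sg * Real.sqrt (7/8))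
            = 1/4 + |lam| * Real.sqrt (7/8) := by rw [← hsgl]; ring
        rw [this]
        have := Real.sqrt_nonneg (7/8 : ℝ)
        nlinarith [mul_nonneg habs0 this]
      · have heq : 2 * ((1/8 : ℝ) + 1/8 + 1/8 + 1/8 + 1/8 + 1/8)
            + lam * -(sg * Real.sqrt (7/8))
            = 3/2 - |lam| * Real.sqrt (7/8) := by rw [← hsgl]; ring
        rw [heq]
        have hs1 : Real.sqrt (7/8 : ℝ) ≤ 1 := by
          rw [show (1:ℝ) = Real.sqrt 1 by simp]
          exact Real.sqrt_le_sqrt (by norm_num)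
        have := Real.sqrt_nonneg (7/8 : ℝ)
        nlinarith [mul_le_one₀ hs1 habs0 hc]
    · push_neg at hc
      obtain ⟨u, hudef⟩ : ∃ u : ℝ, u = |lam|^2 := ⟨_, rfl⟩
      have hu1 : 1 ≤ u := by rw [hudef]; nlinarith
      have hu2 : u < 32/7 := by rw [hudef, sq_abs]; exact hl2
      obtain ⟨b, hbdef⟩ : ∃ b : ℝ,
        b = 15119/61250 + 139/7000*u - 9/5000*u^2 := ⟨_, rfl⟩
      obtain ⟨S, hSdef⟩ : ∃ S : ℝ, S = 1/2 + 6*b - 24*b^2 := ⟨_, rfl⟩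
      have hb18 : (1:ℝ)/8 ≤ b := by rw [hbdef]; exact b_lower u hu1 hu2
      have hb12 : b < (1:ℝ)/2 := by rw [hbdef]; exact b_upper u hu1 hu2
      have hP1 : (6*b - 1)^2 < u * S := by
        rw [hSdef, hbdef]; exact electric_poly u hu1 hu2
      have hP2 : u * S < (2 - 4*b)^2 := by
        rw [hSdef, hbdef]; exact magnetic_poly u hu1 hu2
      have hu0 : 0 < u := by linarith
      have hS : 0 < S := S_pos u S (6*b - 1) hP1 hu0
      have hsqS : Real.sqrt S ^ 2 = S := Real.sq_sqrt hS.le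
      have hsqSpos : 0 < Real.sqrt S := Real.sqrt_pos.2 hS
      have hx2 : (|lam| * Real.sqrt S)^2 = u * S := by
        rw [mul_pow, hsqS, ← hudef]
      have hx0 : 0 < |lam| * Real.sqrt S := by
        have h' : 0 < |lam| := by linarith
        positivity
      have hxgt : 6*b - 1 < |lam| * Real.sqrt S :=
        sq_lt_lower _ _ (by rw [hx2]; exact hP1) hx0.le
      have hxlt : |lam| * Real.sqrt S < 2 - 4*b :=
        sq_lt_upper _ _ (by rw [hx2]; exact hP2) hx0.le (by linarith)
      refine ⟨1/2 - 3*b, 1/2 - 3*b, b, b, b, b, b, b, -(sg * Real.sqrt S),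
        le_refl _, by linarith, le_refl _, le_refl _, le_refl _, le_refl _,
        le_refl _, by ring, ?_, ?_, ?_⟩
      · have hA2 : (-(sg * Real.sqrt S))^2 = S := by
          have h' : (-(sg * Real.sqrt S))^2 = sg^2 * Real.sqrt S ^ 2 := by ring
          rw [h', hsg2, hsqS]; ring
        rw [hA2, hSdef]; ring
      · have heq : 2 * (1/2 - 3*b) - lam * -(sg * Real.sqrt S)
            = (|lam| * Real.sqrt S) - (6*b - 1) := by rw [← hsgl]; ring
        rw [heq]; linarith
      · have heq : 2 * ((1/2 - 3*b) + (1/2 - 3*b) + b + b + b + b)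
            + lam * -(sg * Real.sqrt S)
            = (2 - 4*b) - (|lam| * Real.sqrt S) := by rw [← hsgl]; ring
        rw [heq]; linarith
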